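/- arXiv:1406.0049 — 3 statements merged into one kernel-verified Lean document; each statement's English description precedes it below -/
import Mathlib

section
/- If X is a nonnegative random variable such that ln(1+X) is integrable, then E[ln(1+X)] = ∫₀^∞ (e^{−s}/s)(1 − E[e^{−sX}]) ds. -/
open MeasureTheory

open MeasureTheory Set Real Function
open scoped ENNReal

-- exponential integral on Ioi 0
lemma exp_int (t : ℝ) (ht : 0 < t) :
    ∫ s in Ioi (0:ℝ), Real.exp (-(t * s)) = 1 / t := by
  have := integral_comp_mul_left_Ioi (fun u => Real.exp (-u)) 0 ht
  simp only [mul_zero, integral_exp_neg_Ioi, Real.exp_zero, smul_eq_mul, mul_one] at this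
  rw [this]
  simp

-- interval step: (e^{-s} - e^{-s(1+x)})/s = ∫ t in Ioc 1 (1+x), e^{-s t}
lemma inner_int (s x : ℝ) (hs : 0 < s) (hx : 0 ≤ x) :
    ∫ t in Ioc (1:ℝ) (1+x), Real.exp (-(s * t)) =
      (Real.exp (-s) - Real.exp (-(s * (1+x)))) / s := by
  have h1 : (1:ℝ) ≤ 1 + x := by linarith
  have hderiv : ∀ t ∈ Set.uIcc (1:ℝ) (1+x),
      HasDerivAt (fun t => -(Real.exp (-(s * t)) / s)) (Real.exp (-(s * t))) t := by
    intro t _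
    have h : HasDerivAt (fun t : ℝ => -(s * t)) (-s) t := by
      simpa using ((hasDerivAt_id t).const_mul (-s))
    have : HasDerivAt (fun t => -(Real.exp (-(s * t)) / s)) (-(Real.exp (-(s * t)) * -s / s)) t :=
      ((h.exp).div_const s).neg
    convert this using 1
    rw [mul_neg, neg_div, neg_neg, mul_div_assoc, div_self hs.ne', mul_one]
  have hcont : IntervalIntegrable (fun t => Real.exp (-(s * t))) volume 1 (1+x) :=
    (Real.continuous_exp.comp (by continuity)).intervalIntegrable _ _
  have := intervalIntegral.integral_eq_sub_of_hasDerivAt hderiv hcont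
  rw [← intervalIntegral.integral_of_le h1, this]
  field_simp
  ring

lemma frullani_lint (x : ℝ) (hx : 0 ≤ x) :
    ∫⁻ s in Ioi (0:ℝ),
        ENNReal.ofReal ((Real.exp (-s) - Real.exp (-(s * (1+x)))) / s) =
      ENNReal.ofReal (Real.log (1+x)) := by
  have h1 : (1:ℝ) ≤ 1 + x := by linarith
  have step1 : ∫⁻ s in Ioi (0:ℝ),
      ENNReal.ofReal ((Real.exp (-s) - Real.exp (-(s * (1+x)))) / s) =
      ∫⁻ s in Ioi (0:ℝ), ∫⁻ t in Ioc (1:ℝ) (1+x),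
        ENNReal.ofReal (Real.exp (-(s * t))) := by
    apply setLIntegral_congr_fun measurableSet_Ioi
    intro s hs
    dsimp only
    rw [← inner_int s x hs hx,
      ofReal_integral_eq_lintegral_ofReal]
    · exact ((Real.continuous_exp.comp (by continuity)).integrableOn_Ioc)
    · exact Filter.Eventually.of_forall fun t => (Real.exp_pos _).le
  have hswap : ∫⁻ s in Ioi (0:ℝ), ∫⁻ t in Ioc (1:ℝ) (1+x),
        ENNReal.ofReal (Real.exp (-(s * t))) =
      ∫⁻ t in Ioc (1:ℝ) (1+x), ∫⁻ s in Ioi (0:ℝ),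
        ENNReal.ofReal (Real.exp (-(s * t))) := by
    apply lintegral_lintegral_swap
    exact (ENNReal.measurable_ofReal.comp
      ((measurable_fst.mul measurable_snd).neg.exp)).aemeasurable
  have step3 : ∫⁻ t in Ioc (1:ℝ) (1+x), ∫⁻ s in Ioi (0:ℝ),
        ENNReal.ofReal (Real.exp (-(s * t))) =
      ∫⁻ t in Ioc (1:ℝ) (1+x), ENNReal.ofReal (1 / t) := by
    apply setLIntegral_congr_fun measurableSet_Ioc
    intro t ht
    dsimp only
    have ht0 : 0 < t := lt_of_lt_of_le one_pos ht.1.le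
    have : ∫⁻ s in Ioi (0:ℝ), ENNReal.ofReal (Real.exp (-(s * t))) =
        ENNReal.ofReal (∫ s in Ioi (0:ℝ), Real.exp (-(t * s))) := by
      rw [ofReal_integral_eq_lintegral_ofReal]
      · congr 1; ext s; rw [mul_comm]
      · simpa [neg_mul, IntegrableOn] using exp_neg_integrableOn_Ioi 0 ht0
      · exact Filter.Eventually.of_forall fun s => (Real.exp_pos _).le
    rw [this, exp_int t ht0]
  have step4 : ∫⁻ t in Ioc (1:ℝ) (1+x), ENNReal.ofReal (1 / t) =
      ENNReal.ofReal (Real.log (1+x)) := by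
    rw [← ofReal_integral_eq_lintegral_ofReal]
    · rw [← intervalIntegral.integral_of_le h1, integral_one_div, div_one]
      intro h0
      rw [Set.uIcc_of_le h1] at h0
      exact absurd h0.1 (by norm_num)
    · apply IntegrableOn.mono_set _ Ioc_subset_Icc_self
      apply ContinuousOn.integrableOn_compact isCompact_Icc
      exact continuousOn_const.div continuousOn_id fun t ht => by
        have : (0:ℝ) < t := lt_of_lt_of_le one_pos ht.1
        exact this.ne'
    · refine (ae_restrict_iff' measurableSet_Ioc).2 (Filter.Eventually.of_forall fun t ht => ?_)
      have : (0:ℝ) < t := lt_of_lt_of_le one_pos ht.1.le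
      positivity
  rw [step1, hswap, step3, step4]

theorem hamdi_lemma {Ω : Type*} [MeasurableSpace Ω]
    (μ : Measure Ω) [IsProbabilityMeasure μ] (X : Ω → ℝ) (hX : Measurable X)
    (hnn : ∀ ω, 0 ≤ X ω)
    (hint : Integrable (fun ω => Real.log (1 + X ω)) μ) :
    ∫ ω, Real.log (1 + X ω) ∂μ =
      ∫ s in Set.Ioi (0 : ℝ),
        (Real.exp (-s) / s) * (1 - ∫ ω, Real.exp (-s * X ω) ∂μ) := by
  -- basic facts
  have hlog_nn : ∀ ω, 0 ≤ Real.log (1 + X ω) := fun ω =>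
    Real.log_nonneg (by linarith [hnn ω])
  -- MGF integrability and bounds
  have hMmeas : ∀ s : ℝ, Measurable fun ω => Real.exp (-(s * X ω)) := fun s =>
    (Real.measurable_exp.comp ((hX.const_mul s).neg))
  have hMint : ∀ s : ℝ, 0 < s → Integrable (fun ω => Real.exp (-(s * X ω))) μ := by
    intro s hs
    refine (integrable_const (1:ℝ)).mono' (hMmeas s).aestronglyMeasurable ?_
    filter_upwards with ω
    rw [Real.norm_eq_abs, abs_of_pos (Real.exp_pos _)]
    exact Real.exp_le_one_iff.2 (by nlinarith [hnn ω])
  have hMle : ∀ s : ℝ, 0 < s → (∫ ω, Real.exp (-(s * X ω)) ∂μ) ≤ 1 := by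
    intro s hs
    calc (∫ ω, Real.exp (-(s * X ω)) ∂μ) ≤ ∫ _, (1:ℝ) ∂μ := by
          apply integral_mono (hMint s hs) (integrable_const 1)
          intro ω
          exact Real.exp_le_one_iff.2 (by nlinarith [hnn ω])
      _ = 1 := by simp
  -- F s ω pointwise decomposition
  have hFdecomp : ∀ (s : ℝ) (ω : Ω),
      (Real.exp (-s) - Real.exp (-(s * (1 + X ω)))) / s =
        Real.exp (-s) / s - Real.exp (-s) / s * Real.exp (-(s * X ω)) := by
    intro s ω
    have : Real.exp (-(s * (1 + X ω))) = Real.exp (-s) * Real.exp (-(s * X ω)) := by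
      rw [← Real.exp_add]; ring_nf
    rw [this]; ring
  -- integral of F s over ω
  have hFint : ∀ s : ℝ, 0 < s →
      Integrable (fun ω => (Real.exp (-s) - Real.exp (-(s * (1 + X ω)))) / s) μ := by
    intro s hs
    have := (integrable_const (Real.exp (-s) / s)).sub (((hMint s hs).const_mul
      (Real.exp (-s) / s)))
    refine this.congr ?_
    filter_upwards with ω
    exact (hFdecomp s ω).symm
  have hFnn : ∀ (s : ℝ), 0 < s → ∀ ω,
      0 ≤ (Real.exp (-s) - Real.exp (-(s * (1 + X ω)))) / s := by
    intro s hs ω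
    apply div_nonneg _ hs.le
    have : -(s * (1 + X ω)) ≤ -s := by nlinarith [hnn ω]
    linarith [Real.exp_le_exp.2 this]
  have hFval : ∀ s : ℝ, 0 < s →
      (∫ ω, (Real.exp (-s) - Real.exp (-(s * (1 + X ω)))) / s ∂μ) =
        Real.exp (-s) / s * (1 - ∫ ω, Real.exp (-s * X ω) ∂μ) := by
    intro s hs
    have heq : ∀ ω, Real.exp (-s * X ω) = Real.exp (-(s * X ω)) := fun ω => by
      rw [neg_mul]
    simp_rw [hFdecomp s, heq]
    rw [integral_sub (integrable_const _) ((hMint s hs).const_mul _),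
      integral_const, integral_const_mul]
    simp [mul_sub]
  -- lintegral forms
  set F : Ω → ℝ → ℝ≥0∞ := fun ω s =>
    ENNReal.ofReal ((Real.exp (-s) - Real.exp (-(s * (1 + X ω)))) / s) with hF
  have hswap : ∫⁻ ω, (∫⁻ s in Ioi (0:ℝ), F ω s) ∂μ =
      ∫⁻ s in Ioi (0:ℝ), ∫⁻ ω, F ω s ∂μ := by
    apply lintegral_lintegral_swap
    apply Measurable.aemeasurable
    apply ENNReal.measurable_ofReal.comp
    apply Measurable.div _ measurable_snd
    exact (measurable_snd.neg.exp).sub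
      ((measurable_snd.mul ((measurable_const.add (hX.comp measurable_fst)))).neg.exp)
  have hLHS : ∫ ω, Real.log (1 + X ω) ∂μ =
      (∫⁻ ω, ENNReal.ofReal (Real.log (1 + X ω)) ∂μ).toReal := by
    rw [integral_eq_lintegral_of_nonneg_ae (Filter.Eventually.of_forall hlog_nn)
      hint.aestronglyMeasurable]
  have hstep1 : ∫⁻ ω, ENNReal.ofReal (Real.log (1 + X ω)) ∂μ =
      ∫⁻ ω, (∫⁻ s in Ioi (0:ℝ), F ω s) ∂μ := by
    apply lintegral_congr fun ω => ?_
    rw [← frullani_lint (X ω) (hnn ω)]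
  have hstep2 : ∫⁻ s in Ioi (0:ℝ), ∫⁻ ω, F ω s ∂μ =
      ∫⁻ s in Ioi (0:ℝ), ENNReal.ofReal
        (Real.exp (-s) / s * (1 - ∫ ω, Real.exp (-s * X ω) ∂μ)) := by
    apply setLIntegral_congr_fun measurableSet_Ioi
    intro s hs
    rw [hF]
    dsimp only
    rw [← ofReal_integral_eq_lintegral_ofReal (hFint s hs)
      (Filter.Eventually.of_forall (hFnn s hs)), hFval s hs]
  have hGnn : ∀ᵐ s ∂(volume.restrict (Ioi (0:ℝ))),
      0 ≤ Real.exp (-s) / s * (1 - ∫ ω, Real.exp (-s * X ω) ∂μ) := by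
    refine (ae_restrict_iff' measurableSet_Ioi).2 (Filter.Eventually.of_forall fun s hs => ?_)
    have h1 : (∫ ω, Real.exp (-s * X ω) ∂μ) ≤ 1 := by
      have := hMle s hs
      simpa [neg_mul] using this
    have h2 : 0 ≤ Real.exp (-s) / s := div_nonneg (Real.exp_pos _).le (le_of_lt hs)
    nlinarith
  have hGmeas : AEStronglyMeasurable
      (fun s => Real.exp (-s) / s * (1 - ∫ ω, Real.exp (-s * X ω) ∂μ))
      (volume.restrict (Ioi (0:ℝ))) := by
    apply Measurable.aestronglyMeasurable
    apply Measurable.mul (measurable_id.neg.exp.div measurable_id)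
    apply Measurable.const_sub
    have : StronglyMeasurable fun p : ℝ × Ω => Real.exp (-p.1 * X p.2) :=
      ((measurable_fst.neg.mul (hX.comp measurable_snd)).exp).stronglyMeasurable
    exact this.integral_prod_right'.measurable
  have hRHS : ∫ s in Set.Ioi (0:ℝ),
      Real.exp (-s) / s * (1 - ∫ ω, Real.exp (-s * X ω) ∂μ) =
      (∫⁻ s in Ioi (0:ℝ), ENNReal.ofReal
        (Real.exp (-s) / s * (1 - ∫ ω, Real.exp (-s * X ω) ∂μ))).toReal := by
    rw [integral_eq_lintegral_of_nonneg_ae hGnn hGmeas]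
  rw [hLHS, hstep1, hswap, hstep2, hRHS]
end

section
/- Let γ₁, γ₂ be independent integrable nonnegative random variables such that ln(1 + γ₁ + γ₂) is integrable. Then E[ln(1+γ₁+γ₂)] ≥ ln(1 + e^{E[ln γ₁]} + e^{E[ln γ₂]}), provided ln γ₁ and ln γ₂ are integrable. -/
open MeasureTheory ProbabilityTheory

lemma convexOn_log_add_exp {c : ℝ} (hc : 0 < c) :
    ConvexOn ℝ Set.univ (fun u => Real.log (c + Real.exp u)) := by
  have hd : ∀ u : ℝ, HasDerivAt (fun u => Real.log (c + Real.exp u))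
      (Real.exp u / (c + Real.exp u)) u := by
    intro u
    have h1 : HasDerivAt (fun u : ℝ => c + Real.exp u) (Real.exp u) u :=
      (Real.hasDerivAt_exp u).const_add c
    exact h1.log (by positivity)
  apply Monotone.convexOn_univ_of_deriv
  · exact fun u => (hd u).differentiableAt
  · have hderiv : (deriv fun u => Real.log (c + Real.exp u)) =
        fun u => Real.exp u / (c + Real.exp u) := by
      ext u; exact (hd u).deriv
    rw [hderiv]
    intro a b hab
    have ha : (0:ℝ) < c + Real.exp a := by positivity
    have hb : (0:ℝ) < c + Real.exp b := by positivity
    rw [div_le_div_iff₀ ha hb]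
    have := Real.exp_le_exp.mpr hab
    nlinarith [Real.exp_pos a, Real.exp_pos b]

/-- 1D Jensen: `E[log (c + X)] ≥ log (c + exp (E[log X]))`. -/
lemma key_jensen (ν : Measure ℝ) [IsProbabilityMeasure ν] {c : ℝ} (hc : 0 < c)
    (hpos : ∀ᵐ x ∂ν, 0 < x) (hlog : Integrable Real.log ν)
    (hint : Integrable (fun x => Real.log (c + x)) ν) :
    Real.log (c + Real.exp (∫ x, Real.log x ∂ν)) ≤ ∫ x, Real.log (c + x) ∂ν := by
  have hconv := convexOn_log_add_exp hc
  have hcont : Continuous (fun u => Real.log (c + Real.exp u)) :=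
    (continuous_const.add Real.continuous_exp).log (fun x => (add_pos hc (Real.exp_pos x)).ne')
  have hae : (fun x => Real.log (c + Real.exp (Real.log x))) =ᵐ[ν]
      (fun x => Real.log (c + x)) := by
    filter_upwards [hpos] with x hx
    rw [Real.exp_log hx]
  have hgi : Integrable ((fun u => Real.log (c + Real.exp u)) ∘ Real.log) ν :=
    hint.congr hae.symm
  have := hconv.map_integral_le hcont.continuousOn isClosed_univ
    (Filter.Eventually.of_forall fun x => Set.mem_univ _) hlog hgi
  calc Real.log (c + Real.exp (∫ x, Real.log x ∂ν))
      ≤ ∫ x, Real.log (c + Real.exp (Real.log x)) ∂ν := this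
    _ = ∫ x, Real.log (c + x) ∂ν := integral_congr_ae hae

theorem jensen_lower_bound {Ω : Type*} [MeasurableSpace Ω]
    (μ : Measure Ω) [IsProbabilityMeasure μ] (γ₁ γ₂ : Ω → ℝ)
    (hmeas₁ : Measurable γ₁) (hmeas₂ : Measurable γ₂)
    (hindep : IndepFun γ₁ γ₂ μ)
    (hpos₁ : ∀ ω, 0 < γ₁ ω) (hpos₂ : ∀ ω, 0 < γ₂ ω)
    (hint₁ : Integrable γ₁ μ) (hint₂ : Integrable γ₂ μ)
    (hlog₁ : Integrable (fun ω => Real.log (γ₁ ω)) μ)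
    (hlog₂ : Integrable (fun ω => Real.log (γ₂ ω)) μ)
    (hlogsum : Integrable (fun ω => Real.log (1 + γ₁ ω + γ₂ ω)) μ) :
    ∫ ω, Real.log (1 + γ₁ ω + γ₂ ω) ∂μ ≥
      Real.log (1 + Real.exp (∫ ω, Real.log (γ₁ ω) ∂μ)
        + Real.exp (∫ ω, Real.log (γ₂ ω) ∂μ)) := by
  set ν₁ := μ.map γ₁ with hν₁
  set ν₂ := μ.map γ₂ with hν₂
  have : IsProbabilityMeasure ν₁ := Measure.isProbabilityMeasure_map hmeas₁.aemeasurable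
  have : IsProbabilityMeasure ν₂ := Measure.isProbabilityMeasure_map hmeas₂.aemeasurable
  have hprod : μ.map (fun ω => (γ₁ ω, γ₂ ω)) = ν₁.prod ν₂ :=
    (indepFun_iff_map_prod_eq_prod_map_map hmeas₁.aemeasurable
      hmeas₂.aemeasurable).mp hindep
  -- positivity a.e.
  have hpos₁' : ∀ᵐ x ∂ν₁, 0 < x := by
    rw [hν₁, ae_map_iff hmeas₁.aemeasurable measurableSet_Ioi]
    exact Filter.Eventually.of_forall hpos₁
  have hpos₂' : ∀ᵐ y ∂ν₂, 0 < y := by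
    rw [hν₂, ae_map_iff hmeas₂.aemeasurable measurableSet_Ioi]
    exact Filter.Eventually.of_forall hpos₂
  -- log integrable on maps
  have hlog₁' : Integrable Real.log ν₁ :=
    (integrable_map_measure Real.measurable_log.aestronglyMeasurable
      hmeas₁.aemeasurable).mpr hlog₁
  have hlog₂' : Integrable Real.log ν₂ :=
    (integrable_map_measure Real.measurable_log.aestronglyMeasurable
      hmeas₂.aemeasurable).mpr hlog₂
  have hm₁ : ∫ x, Real.log x ∂ν₁ = ∫ ω, Real.log (γ₁ ω) ∂μ :=
    integral_map hmeas₁.aemeasurable Real.measurable_log.aestronglyMeasurable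
  have hm₂ : ∫ y, Real.log y ∂ν₂ = ∫ ω, Real.log (γ₂ ω) ∂μ :=
    integral_map hmeas₂.aemeasurable Real.measurable_log.aestronglyMeasurable
  set m₁ := ∫ ω, Real.log (γ₁ ω) ∂μ
  set m₂ := ∫ ω, Real.log (γ₂ ω) ∂μ
  -- integrability on the product
  have hfmeas : Measurable (fun p : ℝ × ℝ => Real.log (1 + p.1 + p.2)) :=
    Real.measurable_log.comp ((measurable_const.add measurable_fst).add measurable_snd)
  have hF : Integrable (fun p : ℝ × ℝ => Real.log (1 + p.1 + p.2)) (ν₁.prod ν₂) := by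
    rw [← hprod]
    exact (integrable_map_measure hfmeas.aestronglyMeasurable
      (hmeas₁.prodMk hmeas₂).aemeasurable).mpr hlogsum
  -- rewrite main integral
  have hEq : ∫ ω, Real.log (1 + γ₁ ω + γ₂ ω) ∂μ
      = ∫ x, ∫ y, Real.log (1 + x + y) ∂ν₂ ∂ν₁ := by
    rw [← integral_prod _ hF, ← hprod,
      integral_map (hmeas₁.prodMk hmeas₂).aemeasurable hfmeas.aestronglyMeasurable]
  -- inner Jensen, a.e. in x
  have hinner : ∀ᵐ x ∂ν₁, Real.log (1 + x + Real.exp m₂)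
      ≤ ∫ y, Real.log (1 + x + y) ∂ν₂ := by
    filter_upwards [hpos₁', hF.prod_right_ae] with x hx hxi
    have hc : (0:ℝ) < 1 + x := by linarith
    have := key_jensen ν₂ hc hpos₂' hlog₂'
      (by simpa [add_assoc] using hxi)
    rw [hm₂] at this
    simpa [add_assoc] using this
  -- integrability of the middle function
  have hmid_nonneg : ∀ᵐ x ∂ν₁, 0 ≤ Real.log (1 + x + Real.exp m₂) := by
    filter_upwards [hpos₁'] with x hx
    apply Real.log_nonneg
    have := Real.exp_pos m₂
    linarith
  have hG : Integrable (fun x => ∫ y, Real.log (1 + x + y) ∂ν₂) ν₁ :=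
    hF.integral_prod_left
  have hmid : Integrable (fun x => Real.log (1 + x + Real.exp m₂)) ν₁ := by
    apply Integrable.mono' hG
    · exact (Real.measurable_log.comp
        ((measurable_const.add measurable_id).add measurable_const)).aestronglyMeasurable
    · filter_upwards [hinner, hmid_nonneg] with x h1 h2
      rwa [Real.norm_of_nonneg h2]
  -- outer Jensen
  have houter : Real.log ((1 + Real.exp m₂) + Real.exp m₁)
      ≤ ∫ x, Real.log ((1 + Real.exp m₂) + x) ∂ν₁ := by
    have hc : (0:ℝ) < 1 + Real.exp m₂ := by
      have := Real.exp_pos m₂; linarith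
    have := key_jensen ν₁ hc hpos₁' hlog₁'
      (by simpa [add_assoc, add_comm, add_left_comm] using hmid)
    rwa [hm₁] at this
  -- combine
  rw [ge_iff_le, hEq]
  calc Real.log (1 + Real.exp m₁ + Real.exp m₂)
      = Real.log ((1 + Real.exp m₂) + Real.exp m₁) := by ring_nf
    _ ≤ ∫ x, Real.log ((1 + Real.exp m₂) + x) ∂ν₁ := houter
    _ = ∫ x, Real.log (1 + x + Real.exp m₂) ∂ν₁ := by
        apply integral_congr_ae
        filter_upwards with x
        ring_nf
    _ ≤ ∫ x, ∫ y, Real.log (1 + x + y) ∂ν₂ ∂ν₁ :=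
        integral_mono_ae (by simpa [add_assoc, add_comm, add_left_comm] using hmid) hG hinner
end

section
/- Combining the two Jensen bounds: for independent positive random variables γ₁, γ₂ with all required integrability, ln(1+γ₁) and ln(1+γ₂) integrable, the quantity C = E[ln((1+γ₁)(1+γ₂)/(1+γ₁+γ₂))] satisfies E[ln(1+γ₁)] + E[ln(1+γ₂)] − ln(1+E[γ₁]+E[γ₂]) ≤ C ≤ E[ln(1+γ₁)] + E[ln(1+γ₂)] − ln(1 + e^{E[ln γ₁]} + e^{E[ln γ₂]}). -/
open MeasureTheory ProbabilityTheory

lemma holder3 {a b : ℝ} (ha : 0 ≤ a) (hb : 0 ≤ b) (hab : a + b = 1)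
    {u₁ u₂ u₃ v₁ v₂ v₃ : ℝ} (hu₁ : 0 ≤ u₁) (hu₂ : 0 ≤ u₂) (hu₃ : 0 ≤ u₃)
    (hv₁ : 0 ≤ v₁) (hv₂ : 0 ≤ v₂) (hv₃ : 0 ≤ v₃)
    (hU : 0 < u₁ + u₂ + u₃) (hV : 0 < v₁ + v₂ + v₃) :
    u₁ ^ a * v₁ ^ b + u₂ ^ a * v₂ ^ b + u₃ ^ a * v₃ ^ b
      ≤ (u₁ + u₂ + u₃) ^ a * (v₁ + v₂ + v₃) ^ b := by
  set U := u₁ + u₂ + u₃ with hUdef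
  set V := v₁ + v₂ + v₃ with hVdef
  have hUa : (0:ℝ) < U ^ a := Real.rpow_pos_of_pos hU a
  have hVb : (0:ℝ) < V ^ b := Real.rpow_pos_of_pos hV b
  have key : ∀ u v : ℝ, 0 ≤ u → 0 ≤ v →
      u ^ a * v ^ b ≤ (a * (u / U) + b * (v / V)) * (U ^ a * V ^ b) := by
    intro u v hu hv
    have h1 : (u / U) ^ a * (v / V) ^ b ≤ a * (u / U) + b * (v / V) :=
      Real.geom_mean_le_arith_mean2_weighted ha hb (div_nonneg hu hU.le)
        (div_nonneg hv hV.le) hab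
    have h2 : (u / U) ^ a * (v / V) ^ b * (U ^ a * V ^ b) = u ^ a * v ^ b := by
      rw [Real.div_rpow hu hU.le, Real.div_rpow hv hV.le]
      field_simp
    calc u ^ a * v ^ b = (u / U) ^ a * (v / V) ^ b * (U ^ a * V ^ b) := h2.symm
      _ ≤ (a * (u / U) + b * (v / V)) * (U ^ a * V ^ b) :=
        mul_le_mul_of_nonneg_right h1 (by positivity)
  have hsum : (a * (u₁ / U) + b * (v₁ / V)) + (a * (u₂ / U) + b * (v₂ / V))
      + (a * (u₃ / U) + b * (v₃ / V)) = 1 := by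
    have e1 : u₁ / U + u₂ / U + u₃ / U = 1 := by
      rw [← add_div, ← add_div, ← hUdef, div_self hU.ne']
    have e2 : v₁ / V + v₂ / V + v₃ / V = 1 := by
      rw [← add_div, ← add_div, ← hVdef, div_self hV.ne']
    linear_combination a * e1 + b * e2 + hab
  have h := add_le_add (add_le_add (key u₁ v₁ hu₁ hv₁) (key u₂ v₂ hu₂ hv₂))
    (key u₃ v₃ hu₃ hv₃)
  rw [← add_mul, ← add_mul, hsum, one_mul] at h
  exact h

lemma convexOn_lse : ConvexOn ℝ Set.univ
    (fun p : ℝ × ℝ => Real.log (1 + Real.exp p.1 + Real.exp p.2)) := by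
  refine ⟨convex_univ, ?_⟩
  rintro ⟨x₁, y₁⟩ - ⟨x₂, y₂⟩ - a b ha hb hab
  simp only [Prod.smul_mk, Prod.mk_add_mk, smul_eq_mul]
  have hU : (0:ℝ) < 1 + Real.exp x₁ + Real.exp y₁ := by positivity
  have hV : (0:ℝ) < 1 + Real.exp x₂ + Real.exp y₂ := by positivity
  have hexp : ∀ x y : ℝ, Real.exp (a * x + b * y) = Real.exp x ^ a * Real.exp y ^ b := by
    intro x y
    rw [Real.exp_add, mul_comm a x, mul_comm b y, Real.exp_mul, Real.exp_mul]
  have h1 : 1 + Real.exp (a * x₁ + b * x₂) + Real.exp (a * y₁ + b * y₂)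
      ≤ (1 + Real.exp x₁ + Real.exp y₁) ^ a * (1 + Real.exp x₂ + Real.exp y₂) ^ b := by
    have h := holder3 ha hb hab (zero_le_one) (Real.exp_pos x₁).le (Real.exp_pos y₁).le
      (zero_le_one) (Real.exp_pos x₂).le (Real.exp_pos y₂).le hU hV
    rw [Real.one_rpow, Real.one_rpow, one_mul] at h
    rw [hexp x₁ x₂, hexp y₁ y₂]
    exact h
  have hL : (0:ℝ) < 1 + Real.exp (a * x₁ + b * x₂) + Real.exp (a * y₁ + b * y₂) := by positivity
  calc Real.log (1 + Real.exp (a * x₁ + b * x₂) + Real.exp (a * y₁ + b * y₂))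
      ≤ Real.log ((1 + Real.exp x₁ + Real.exp y₁) ^ a * (1 + Real.exp x₂ + Real.exp y₂) ^ b) :=
        Real.log_le_log hL h1
    _ = a * Real.log (1 + Real.exp x₁ + Real.exp y₁)
        + b * Real.log (1 + Real.exp x₂ + Real.exp y₂) := by
        rw [Real.log_mul (Real.rpow_pos_of_pos hU a).ne' (Real.rpow_pos_of_pos hV b).ne',
          Real.log_rpow hU, Real.log_rpow hV]

theorem capacity_jensen_bounds {Ω : Type*} [MeasurableSpace Ω]
    (μ : Measure Ω) [IsProbabilityMeasure μ] (γ₁ γ₂ : Ω → ℝ)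
    (hmeas₁ : Measurable γ₁) (hmeas₂ : Measurable γ₂)
    (hindep : IndepFun γ₁ γ₂ μ)
    (hpos₁ : ∀ ω, 0 < γ₁ ω) (hpos₂ : ∀ ω, 0 < γ₂ ω)
    (hint₁ : Integrable γ₁ μ) (hint₂ : Integrable γ₂ μ)
    (hlog₁ : Integrable (fun ω => Real.log (γ₁ ω)) μ)
    (hlog₂ : Integrable (fun ω => Real.log (γ₂ ω)) μ)
    (hlog1p₁ : Integrable (fun ω => Real.log (1 + γ₁ ω)) μ)
    (hlog1p₂ : Integrable (fun ω => Real.log (1 + γ₂ ω)) μ)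
    (hlogsum : Integrable (fun ω => Real.log (1 + γ₁ ω + γ₂ ω)) μ) :
    (∫ ω, Real.log (1 + γ₁ ω) ∂μ) + (∫ ω, Real.log (1 + γ₂ ω) ∂μ)
        - Real.log (1 + (∫ ω, γ₁ ω ∂μ) + ∫ ω, γ₂ ω ∂μ)
      ≤ ∫ ω, Real.log ((1 + γ₁ ω) * (1 + γ₂ ω) / (1 + γ₁ ω + γ₂ ω)) ∂μ ∧
    ∫ ω, Real.log ((1 + γ₁ ω) * (1 + γ₂ ω) / (1 + γ₁ ω + γ₂ ω)) ∂μ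
      ≤ (∫ ω, Real.log (1 + γ₁ ω) ∂μ) + (∫ ω, Real.log (1 + γ₂ ω) ∂μ)
        - Real.log (1 + Real.exp (∫ ω, Real.log (γ₁ ω) ∂μ)
            + Real.exp (∫ ω, Real.log (γ₂ ω) ∂μ)) := by
  have hpos₁₂ : ∀ ω, (0:ℝ) < 1 + γ₁ ω + γ₂ ω := fun ω => by
    have := hpos₁ ω; have := hpos₂ ω; linarith
  -- pointwise decomposition
  have hd : ∀ ω, Real.log ((1 + γ₁ ω) * (1 + γ₂ ω) / (1 + γ₁ ω + γ₂ ω))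
      = Real.log (1 + γ₁ ω) + Real.log (1 + γ₂ ω) - Real.log (1 + γ₁ ω + γ₂ ω) := by
    intro ω
    have h1 : (0:ℝ) < 1 + γ₁ ω := by have := hpos₁ ω; linarith
    have h2 : (0:ℝ) < 1 + γ₂ ω := by have := hpos₂ ω; linarith
    rw [Real.log_div (by positivity) (hpos₁₂ ω).ne', Real.log_mul h1.ne' h2.ne']
  have hC : ∫ ω, Real.log ((1 + γ₁ ω) * (1 + γ₂ ω) / (1 + γ₁ ω + γ₂ ω)) ∂μ
      = (∫ ω, Real.log (1 + γ₁ ω) ∂μ) + (∫ ω, Real.log (1 + γ₂ ω) ∂μ)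
        - ∫ ω, Real.log (1 + γ₁ ω + γ₂ ω) ∂μ := by
    simp only [hd]
    rw [integral_sub (f := fun ω => Real.log (1 + γ₁ ω) + Real.log (1 + γ₂ ω))
      (hlog1p₁.add hlog1p₂) hlogsum, integral_add hlog1p₁ hlog1p₂]
  -- concave Jensen (lower bound)
  have hJle : ∫ ω, Real.log (1 + γ₁ ω + γ₂ ω) ∂μ
      ≤ Real.log (1 + (∫ ω, γ₁ ω ∂μ) + ∫ ω, γ₂ ω ∂μ) := by
    have hconc : ConcaveOn ℝ (Set.Ici (1:ℝ)) Real.log :=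
      strictConcaveOn_log_Ioi.concaveOn.subset
        (fun x hx => Set.mem_Ioi.mpr (lt_of_lt_of_le one_pos (Set.mem_Ici.mp hx))) (convex_Ici 1)
    have hcont : ContinuousOn Real.log (Set.Ici (1:ℝ)) :=
      Real.continuousOn_log.mono fun x hx => by
        simp only [Set.mem_compl_iff, Set.mem_singleton_iff]
        exact (lt_of_lt_of_le one_pos hx).ne'
    have hfi : Integrable (fun ω => 1 + γ₁ ω + γ₂ ω) μ :=
      ((integrable_const (1:ℝ)).add hint₁).add hint₂
    have h := hconc.le_map_integral hcont isClosed_Ici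
      (Filter.Eventually.of_forall fun ω => by
        have := hpos₁ ω; have := hpos₂ ω
        simp only [Set.mem_Ici]; linarith) hfi hlogsum
    have hint : ∫ ω, (1 + γ₁ ω + γ₂ ω) ∂μ = 1 + (∫ ω, γ₁ ω ∂μ) + ∫ ω, γ₂ ω ∂μ := by
      rw [integral_add (f := fun ω => 1 + γ₁ ω) ((integrable_const (1:ℝ)).add hint₁) hint₂,
        integral_add (f := fun _ => (1:ℝ)) (integrable_const (1:ℝ)) hint₁, integral_const]
      simp
    rwa [hint] at h
  -- convex Jensen (upper bound)
  have hJge : Real.log (1 + Real.exp (∫ ω, Real.log (γ₁ ω) ∂μ)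
        + Real.exp (∫ ω, Real.log (γ₂ ω) ∂μ))
      ≤ ∫ ω, Real.log (1 + γ₁ ω + γ₂ ω) ∂μ := by
    set g : ℝ × ℝ → ℝ := fun p => Real.log (1 + Real.exp p.1 + Real.exp p.2) with hg
    set f : Ω → ℝ × ℝ := fun ω => (Real.log (γ₁ ω), Real.log (γ₂ ω)) with hf
    have hgf : ∀ ω, g (f ω) = Real.log (1 + γ₁ ω + γ₂ ω) := fun ω => by
      simp only [hg, hf, Real.exp_log (hpos₁ ω), Real.exp_log (hpos₂ ω)]
    have hcont : ContinuousOn g Set.univ := by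
      have hc : Continuous (fun p : ℝ × ℝ => 1 + Real.exp p.1 + Real.exp p.2) := by
        continuity
      exact (hc.log fun p => by positivity).continuousOn
    have hgi : Integrable (g ∘ f) μ := hlogsum.congr
      (Filter.Eventually.of_forall fun ω => (hgf ω).symm)
    have h := convexOn_lse.map_integral_le hcont isClosed_univ
      (Filter.Eventually.of_forall fun ω => Set.mem_univ _) (hlog₁.prodMk hlog₂) hgi
    rw [integral_pair hlog₁ hlog₂] at h
    calc Real.log (1 + Real.exp (∫ ω, Real.log (γ₁ ω) ∂μ)
          + Real.exp (∫ ω, Real.log (γ₂ ω) ∂μ))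
        = g (∫ ω, Real.log (γ₁ ω) ∂μ, ∫ ω, Real.log (γ₂ ω) ∂μ) := rfl
      _ ≤ ∫ ω, g (f ω) ∂μ := h
      _ = ∫ ω, Real.log (1 + γ₁ ω + γ₂ ω) ∂μ := by simp only [hgf]
  rw [hC]
  constructor <;> linarith
end
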